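/- arXiv:1207.2605 — 2 statements merged into one kernel-verified Lean document; each statement's English description precedes it below -/
import Mathlib

section
/- For all integers d ≥ 0, the sum over all pairs of nonnegative integers (m,n) with m + 2n = d of ((m+3)/105) · C(m+5,5) · C(n+4,4) · C(n+m+7,4) equals C(15+d, 15), where C(a,b) denotes the binomial coefficient. -/
set_option maxHeartbeats 1600000
set_option maxRecDepth 8000

noncomputable def gq (n d : ℚ) : ℚ :=
  ((d - 2*n + 3)/105) * ((d-2*n+1)*(d-2*n+2)*(d-2*n+3)*(d-2*n+4)*(d-2*n+5)/120) *
    ((n+1)*(n+2)*(n+3)*(n+4)/24) * ((d-n+4)*(d-n+5)*(d-n+6)*(d-n+7)/24)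

noncomputable def Hq (N d : ℚ) : ℚ := ((653837184000) + (2207478873600)*d^1 + (3162366567360)*d^2 + (2562592032000)*d^3 + (1311123013200)*d^4 + (444972528000)*d^5 + (101844222480)*d^6 + (15567552000)*d^7 + (1524322800)*d^8 + (86486400)*d^9 + (2162160)*d^10 + (-75794745600)*N^1 + (-236753280000)*N^1*d^1 + (-39584136528)*N^1*d^2 + (401240876400)*N^1*d^3 + (504704704140)*N^1*d^4 + (292522950720)*N^1*d^5 + (97805703996)*N^1*d^6 + (19964458800)*N^1*d^7 + (2461233060)*N^1*d^8 + (168648480)*N^1*d^9 + (4936932)*N^1*d^10 + (155675520000)*N^2 + (-175326094944)*N^2*d^1 + (-1245220376400)*N^2*d^2 + (-1596123028500)*N^2*d^3 + (-942376084650)*N^2*d^4 + (-293032715976)*N^2*d^5 + (-44463469050)*N^2*d^6 + (-909728820)*N^2*d^7 + (706756050)*N^2*d^8 + (96336240)*N^2*d^9 + (4054050)*N^2*d^10 + (236235295296)*N^3 + (1558859702400)*N^3*d^1 + (2326878674120)*N^3*d^2 + (1385254170300)*N^3*d^3 + (302310518510)*N^3*d^4 + (-39150111000)*N^3*d^5 +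 (-33007464490)*N^3*d^6 + (-6321615300)*N^3*d^7 + (-429459030)*N^3*d^8 + (7207200)*N^3*d^9 + (1531530)*N^3*d^10 + (-670226356800)*N^4 + (-1502526185160)*N^4*d^1 + (-779777328330)*N^4*d^2 + (236360709585)*N^4*d^3 + (341991099450)*N^4*d^4 + (115994028150)*N^4*d^5 + (14448994560)*N^4*d^6 + (-286981695)*N^4*d^7 + (-201351150)*N^4*d^8 + (-9609600)*N^4*d^9 + (270270)*N^4*d^10 + (306879452880)*N^5 + (-112043491560)*N^5*d^1 + (-805293711222)*N^5*d^2 + (-613160648100)*N^5*d^3 + (-162402930690)*N^5*d^4 + (-2416574160)*N^5*d^5 + (6003261264)*N^5*d^6 + (856755900)*N^5*d^7 + (9999990)*N^5*d^8 + (-2882880)*N^5*d^9 + (18018)*N^5*d^10 + (190118368440)*N^6 + (638283914268)*N^6*d^1 + (481274293500)*N^6*d^2 + (69318519270)*N^6*d^3 + (-45853107300)*N^6*d^4 + (-17424054648)*N^6*d^5 + (-1545043500)*N^6*d^6 + (99369270)*N^6*d^7 + (13513500)*N^6*d^8 + (-240240)*N^6*d^9 + (-162019465608)*N^7 + (-144543484800)*N^7*d^1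 + (64674624300)*N^7*d^2 + (88704415800)*N^7*d^3 + (24063699660)*N^7*d^4 + (609008400)*N^7*d^5 + (-481501020)*N^7*d^6 + (-34749000)*N^7*d^7 + (1467180)*N^7*d^8 + (781981200)*N^8 + (-78557759280)*N^8*d^1 + (-74108484450)*N^8*d^2 + (-16024083075)*N^8*d^3 + (2525222700)*N^8*d^4 + (1057206150)*N^8*d^5 + (48198150)*N^8*d^6 + (-5360355)*N^8*d^7 + (22665683040)*N^9 + (28238169960)*N^9*d^1 + (2395483090)*N^9*d^2 + (-5033028000)*N^9*d^3 + (-1338837500)*N^9*d^4 + (-19579560)*N^9*d^5 + (12902890)*N^9*d^6 + (-3536212680)*N^10 + (2659612956)*N^10*d^1 + (4230626400)*N^10*d^2 + (996275280)*N^10*d^3 + (-48648600)*N^10*d^4 + (-21297276)*N^10*d^5 + (-1053852072)*N^11 + (-1727107200)*N^11*d^1 + (-394561440)*N^11*d^2 + (95659200)*N^11*d^3 + (24340680)*N^11*d^4 + (273873600)*N^12 + (54294240)*N^12*d^1 + (-79279200)*N^12*d^2 + (-18978960)*N^12*d^3 + (5839680)*N^13 + (33264000)*N^13*d^1 + (9646560)*N^13*d^2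 + (-5765760)*N^14 + (-2882880)*N^14*d^1 + (384384)*N^15) / 653837184000

lemma cast_choose5 (a : ℕ) : ((a+5).choose 5 : ℚ)
    = ((a:ℚ)+1)*((a:ℚ)+2)*((a:ℚ)+3)*((a:ℚ)+4)*((a:ℚ)+5)/120 := by
  have h : (a+5).choose 5 * 120 * a.factorial = (a+5).factorial := by
    have h0 := Nat.choose_mul_factorial_mul_factorial (Nat.le_add_left 5 a)
    simpa [Nat.factorial] using h0
  have hfac : (a+5).factorial = (a+5)*((a+4)*((a+3)*((a+2)*((a+1)*a.factorial)))) := rfl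
  have hne : (a.factorial : ℚ) ≠ 0 := by
    exact_mod_cast a.factorial_ne_zero
  rw [hfac] at h
  have hq := congrArg (Nat.cast : ℕ → ℚ) h
  push_cast at hq
  rw [eq_div_iff (by norm_num : (120:ℚ) ≠ 0)]
  apply mul_right_cancel₀ hne
  linear_combination hq

lemma cast_choose4 (a : ℕ) : ((a+4).choose 4 : ℚ)
    = ((a:ℚ)+1)*((a:ℚ)+2)*((a:ℚ)+3)*((a:ℚ)+4)/24 := by
  have h : (a+4).choose 4 * 24 * a.factorial = (a+4).factorial := by
    have h0 := Nat.choose_mul_factorial_mul_factorial (Nat.le_add_left 4 a)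
    simpa [Nat.factorial] using h0
  have hfac : (a+4).factorial = (a+4)*((a+3)*((a+2)*((a+1)*a.factorial))) := rfl
  have hne : (a.factorial : ℚ) ≠ 0 := by
    exact_mod_cast a.factorial_ne_zero
  rw [hfac] at h
  have hq := congrArg (Nat.cast : ℕ → ℚ) h
  push_cast at hq
  rw [eq_div_iff (by norm_num : (24:ℚ) ≠ 0)]
  apply mul_right_cancel₀ hne
  linear_combination hq

lemma cast_choose15 (d : ℕ) : ((15+d).choose 15 : ℚ)
    = ((d:ℚ)+1)*((d:ℚ)+2)*((d:ℚ)+3)*((d:ℚ)+4)*((d:ℚ)+5)*((d:ℚ)+6)*((d:ℚ)+7)*((d:ℚ)+8)*((d:ℚ)+9)*((d:ℚ)+10)*((d:ℚ)+11)*((d:ℚ)+12)*((d:ℚ)+13)*((d:ℚ)+14)*((d:ℚ)+15)/1307674368000 := by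
  induction d with
  | zero => norm_num
  | succ d ih =>
    have hsymm : ∀ e : ℕ, (15+e).choose 15 = (15+e).choose e := by
      intro e
      have h := Nat.choose_symm (show 15 ≤ 15 + e by omega)
      simpa [Nat.add_sub_cancel_left] using h.symm
    have key := Nat.add_one_mul_choose_eq (15+d) d
    try simp only [Nat.succ_eq_add_one] at key
    have key2 : ((16:ℕ)+d) * (15+d).choose 15 = (15+(d+1)).choose 15 * (d+1) := by
      rw [hsymm d, hsymm (d+1), show 15+(d+1) = (15+d)+1 from by omega,
        show (15+d)+1 = 16+d from by omega] at *
      exact key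
    have keyq := congrArg (Nat.cast : ℕ → ℚ) key2
    push_cast at keyq
    have hne : ((d:ℚ)+1) ≠ 0 := by positivity
    rw [show 15+(d+1) = 15+d+1 from by omega] at keyq
    rw [ih] at keyq
    rw [show 15+(d+1) = 15+d+1 from by omega]
    push_cast
    rw [eq_div_iff (by norm_num : (1307674368000:ℚ) ≠ 0)]
    apply mul_right_cancel₀ hne
    linear_combination 1307674368000 * keyq.symm

lemma sumH (d : ℚ) : ∀ N : ℕ, ∑ n ∈ Finset.range (N+1), gq n d = Hq N d := by
  intro N
  induction N with
  | zero =>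
    simp only [zero_add, Finset.sum_range_one, Nat.cast_zero]
    unfold gq Hq
    ring
  | succ N ih =>
    rw [Finset.sum_range_succ, ih]
    unfold gq Hq
    push_cast
    ring

/-- For all `d ≥ 0`, the sum over pairs `(m,n)` of nonnegative integers with `m + 2n = d`
of `((m+3)/105) * C(m+5,5) * C(n+4,4) * C(n+m+7,4)` equals `C(15+d,15)`. -/
theorem stmt_0 (d : ℕ) :
    ∑ p ∈ (Finset.range (d + 1) ×ˢ Finset.range (d + 1)).filter
        (fun p => p.1 + 2 * p.2 = d),
      ((p.1 + 3 : ℚ) / 105) * (Nat.choose (p.1 + 5) 5) * (Nat.choose (p.2 + 4) 4) *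
        (Nat.choose (p.2 + p.1 + 7) 4)
    = Nat.choose (15 + d) 15 := by
  have hre : ∑ p ∈ (Finset.range (d + 1) ×ˢ Finset.range (d + 1)).filter
        (fun p => p.1 + 2 * p.2 = d),
      ((p.1 + 3 : ℚ) / 105) * (Nat.choose (p.1 + 5) 5) * (Nat.choose (p.2 + 4) 4) *
        (Nat.choose (p.2 + p.1 + 7) 4)
      = ∑ n ∈ Finset.range (d/2 + 1),
        (((d - 2*n : ℕ) + 3 : ℚ) / 105) * (Nat.choose ((d - 2*n) + 5) 5) *
          (Nat.choose (n + 4) 4) * (Nat.choose (n + (d - 2*n) + 7) 4) := by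
    apply Finset.sum_bij' (i := fun p _ => p.2) (j := fun n _ => (d - 2*n, n))
    · intro p hp
      simp only [Finset.mem_filter, Finset.mem_product, Finset.mem_range] at hp ⊢
      omega
    · intro n hn
      simp only [Finset.mem_filter, Finset.mem_product, Finset.mem_range] at hn ⊢
      omega
    · intro p hp
      simp only [Finset.mem_filter, Finset.mem_product, Finset.mem_range] at hp
      have : d - 2 * p.2 = p.1 := by omega
      simp [this]
    · intro n hn
      rfl
    · intro p hp
      simp only [Finset.mem_filter, Finset.mem_product, Finset.mem_range] at hp
      have : d - 2 * p.2 = p.1 := by omega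
      simp [this]
  rw [hre]
  have hterm : ∀ n ∈ Finset.range (d/2 + 1),
      (((d - 2*n : ℕ) + 3 : ℚ) / 105) * (Nat.choose ((d - 2*n) + 5) 5) *
        (Nat.choose (n + 4) 4) * (Nat.choose (n + (d - 2*n) + 7) 4) = gq n d := by
    intro n hn
    simp only [Finset.mem_range] at hn
    have h2n : 2*n ≤ d := by omega
    set m := d - 2*n with hm
    have hmd : m + 2*n = d := by omega
    have hmc : (m : ℚ) = (d:ℚ) - 2*(n:ℚ) := by
      have := congrArg (Nat.cast : ℕ → ℚ) hmd
      push_cast at this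
      linarith
    have e3 : n + m + 7 = (n+m+3) + 4 := by omega
    rw [cast_choose5 m, cast_choose4 n, e3, cast_choose4 (n+m+3)]
    unfold gq
    push_cast
    rw [hmc]
    ring
  rw [Finset.sum_congr rfl hterm, sumH d (d/2)]
  rcases Nat.even_or_odd d with ⟨k, hk⟩ | ⟨k, hk⟩
  · have hd2 : d/2 = k := by omega
    rw [hd2, cast_choose15 d]
    have hdc : (d : ℚ) = 2*(k:ℚ) := by
      have := congrArg (Nat.cast : ℕ → ℚ) hk
      push_cast at this
      linarith
    unfold Hq
    rw [hdc]
    ring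
  · have hd2 : d/2 = k := by omega
    rw [hd2, cast_choose15 d]
    have hdc : (d : ℚ) = 2*(k:ℚ)+1 := by
      have := congrArg (Nat.cast : ℕ → ℚ) hk
      push_cast at this
      linarith
    unfold Hq
    rw [hdc]
    ring
end

section
/- Let B be the even-cardinality subsets of {1,...,5}. A pair (I,J) ∈ B × B satisfies |IΔJ| = 4 if and only if its equivalence class under (I,J) ∼ (K,L) ⟺ 1_I + 1_J = 1_K + 1_L has exactly 8 elements, and in that case the class is {(a₁,A₁),(a₂,A₂),(a₃,A₃),(a₄,A₄),(A₄,a₄),(A₃,a₃),(A₂,a₂),(A₁,a₁)} where for each i, a_i ∩ A_i = I ∩ J, a_i ∪ A_i = I ∪ J, and a_i Δ A_i = I Δ J. -/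
/-- The set `B` of even-cardinality subsets of `{1,...,5}`. -/
def evenB : Finset (Finset (Fin 5)) := Finset.univ.filter (fun I => Even I.card)

/-- Indicator function of a subset. -/
def ind (I : Finset (Fin 5)) (x : Fin 5) : ℕ := if x ∈ I then 1 else 0

/-- The equivalence class of a pair `(I,J) ∈ B × B` under the relation
`(I,J) ∼ (K,L) ⟺ 1_I + 1_J = 1_K + 1_L`. -/
def classOf (p : Finset (Fin 5) × Finset (Fin 5)) :
    Finset (Finset (Fin 5) × Finset (Fin 5)) :=
  (evenB ×ˢ evenB).filter (fun r => ∀ x : Fin 5, ind r.1 x + ind r.2 x = ind p.1 x + ind p.2 x)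

lemma mem_classOf {I J : Finset (Fin 5)} (p : Finset (Fin 5) × Finset (Fin 5)) :
    p ∈ classOf (I, J) ↔
      Even p.1.card ∧ Even p.2.card ∧ p.1 ∩ p.2 = I ∩ J ∧
        symmDiff p.1 p.2 = symmDiff I J := by
  have key : (∀ x : Fin 5, ind p.1 x + ind p.2 x = ind I x + ind J x) ↔
      (p.1 ∩ p.2 = I ∩ J ∧ symmDiff p.1 p.2 = symmDiff I J) := by
    rw [Finset.ext_iff, Finset.ext_iff, ← forall_and]
    apply forall_congr'
    intro x
    simp only [ind, Finset.mem_inter, Finset.mem_symmDiff]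
    by_cases h1 : x ∈ p.1 <;> by_cases h2 : x ∈ p.2 <;>
      by_cases h3 : x ∈ I <;> by_cases h4 : x ∈ J <;> simp [h1, h2, h3, h4]
  simp only [classOf, Finset.mem_filter, Finset.mem_product, evenB, Finset.mem_univ,
    true_and, key]
  tauto

lemma even_card_symmDiff {I J : Finset (Fin 5)} (hI : Even I.card) (hJ : Even J.card) :
    Even (symmDiff I J).card := by
  have h1 : symmDiff I J = (I ∪ J) \ (I ∩ J) := by
    ext x; simp [Finset.mem_symmDiff]; tauto
  have h2 : I ∩ J ⊆ I ∪ J := (Finset.inter_subset_left).trans Finset.subset_union_left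
  have h3 := Finset.card_sdiff_of_subset h2
  have h4 := Finset.card_union_add_card_inter I J
  have h5 := Finset.card_le_card h2
  rw [h1, h3]
  rw [Nat.even_iff] at *
  omega

lemma card_powerset_filter_parity {α : Type*} [DecidableEq α] (D : Finset α) (c : ℕ)
    (hD : D.Nonempty) :
    (D.powerset.filter fun S => Even (S.card + c)).card = 2 ^ (D.card - 1) := by
  obtain ⟨a, ha⟩ := hD
  obtain ⟨E, haE, rfl⟩ : ∃ E, a ∉ E ∧ D = insert a E :=
    ⟨D.erase a, D.notMem_erase a, (Finset.insert_erase ha).symm⟩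
  rw [Finset.powerset_insert, Finset.filter_union, Finset.card_union_of_disjoint,
    Finset.filter_image]
  · have hcongr : (E.powerset.filter fun S => Even ((insert a S).card + c)) =
        (E.powerset.filter fun S => ¬ Even (S.card + c)) := by
      apply Finset.filter_congr
      intro S hS
      rw [Finset.mem_powerset] at hS
      have : a ∉ S := fun h => haE (hS h)
      rw [Finset.card_insert_of_notMem this]
      rw [Nat.even_iff, Nat.even_iff]
      omega
    rw [hcongr, Finset.card_image_of_injOn, Finset.card_filter_add_card_filter_not,
      Finset.card_powerset, Finset.card_insert_of_notMem haE]
    · simp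
    · intro S hS T hT h
      simp only [Finset.coe_filter, Set.mem_setOf_eq, Finset.mem_powerset] at hS hT
      have haS : a ∉ S := fun hh => haE (hS.1 hh)
      have haT : a ∉ T := fun hh => haE (hT.1 hh)
      rw [← Finset.erase_insert haS, ← Finset.erase_insert haT, h]
  · rw [Finset.disjoint_left]
    intro S hS hS'
    rw [Finset.mem_filter, Finset.mem_powerset] at hS
    rw [Finset.mem_filter, Finset.mem_image] at hS'
    obtain ⟨T, _, rfl⟩ := hS'.1
    exact haE (hS.1 (Finset.mem_insert_self a T))

set_option maxHeartbeats 2000000 in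
lemma card_classOf (I J : Finset (Fin 5)) (hI : Even I.card) (hJ : Even J.card) :
    (classOf (I, J)).card =
      ((symmDiff I J).powerset.filter fun S => Even (S.card + (I ∩ J).card)).card := by
  obtain ⟨C, hC⟩ : ∃ C, I ∩ J = C := ⟨_, rfl⟩
  obtain ⟨D, hDe⟩ : ∃ D, symmDiff I J = D := ⟨_, rfl⟩
  have hCx : ∀ x, x ∈ C ↔ x ∈ I ∧ x ∈ J := by
    intro x; rw [← hC, Finset.mem_inter]
  have hDx : ∀ x, x ∈ D ↔ (x ∈ I ∧ x ∉ J) ∨ (x ∈ J ∧ x ∉ I) := by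
    intro x; rw [← hDe, Finset.mem_symmDiff]
  have hCD : Disjoint C D := by
    rw [Finset.disjoint_left]
    intro x hx hx'
    rw [hCx] at hx; rw [hDx] at hx'
    tauto
  have hDeven : Even D.card := hDe ▸ even_card_symmDiff hI hJ
  have hCDx : ∀ x, x ∈ C → x ∉ D := fun x hx => Finset.disjoint_left.mp hCD hx
  rw [hC, hDe]
  apply Finset.card_nbij' (i := fun p => p.1 ∩ D) (j := fun S => (C ∪ S, C ∪ (D \ (S : Finset (Fin 5)))))
  -- hi : image lands in the filtered powerset
  · intro p hp
    obtain ⟨h1, h2, h3, h4⟩ := (mem_classOf p).mp hp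
    rw [hC] at h3; rw [hDe] at h4
    have e3 := fun x => Finset.ext_iff.mp h3 x
    have e4 := fun x => Finset.ext_iff.mp h4 x
    simp only [Finset.mem_inter, Finset.mem_symmDiff, hCx, hDx] at e3 e4
    rw [Finset.mem_coe, Finset.mem_filter, Finset.mem_powerset]
    refine ⟨Finset.inter_subset_right, ?_⟩
    have hsplit : p.1 ∩ D ∪ C = p.1 := by
      clear hp hCD hDeven h1 h2 hI hJ
      ext x
      simp only [Finset.mem_union, Finset.mem_inter, hCx, hDx]
      have := e3 x; have := e4 x
      tauto
    have hdisj : Disjoint (p.1 ∩ D) C := by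
      rw [Finset.disjoint_left]
      intro x hx hx'
      exact Finset.disjoint_right.mp hCD (Finset.mem_inter.mp hx).2 hx'
    have hcard := Finset.card_union_of_disjoint hdisj
    rw [hsplit] at hcard
    exact hcard ▸ h1
  -- hj : inverse map lands in classOf
  · intro S hS
    rw [Finset.mem_coe, Finset.mem_filter, Finset.mem_powerset] at hS
    obtain ⟨hSD, hSpar⟩ := hS
    have hSx : ∀ x, x ∈ S → x ∈ D := fun x h => hSD h
    have hCS : Disjoint C S := hCD.mono_right hSD
    have hCDS : Disjoint C (D \ S) := hCD.mono_right (Finset.sdiff_subset)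
    rw [Finset.mem_coe, mem_classOf]
    refine ⟨?_, ?_, ?_, ?_⟩
    · rw [Finset.card_union_of_disjoint hCS]
      rwa [add_comm] at hSpar
    · rw [Finset.card_union_of_disjoint hCDS, Finset.card_sdiff_of_subset hSD]
      have hle := Finset.card_le_card hSD
      rw [Nat.even_iff] at *
      omega
    · rw [hC]
      clear hCS hCDS hCD hDeven hSpar hI hJ
      ext x
      simp only [Finset.mem_inter, Finset.mem_union, Finset.mem_sdiff, hCx]
      have h1 := hSx x
      have h2 := hDx x
      have h3 := hCx x
      have h4 := hCDx x
      tauto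
    · rw [hDe]
      clear hCS hCDS hCD hDeven hSpar hI hJ
      ext x
      simp only [Finset.mem_symmDiff, Finset.mem_union, Finset.mem_sdiff]
      have h1 := hSx x
      have h2 := hDx x
      have h3 := hCx x
      have h4 := hCDx x
      constructor
      · intro h; tauto
      · intro h; tauto
  -- left_inv
  · intro p hp
    obtain ⟨h1, h2, h3, h4⟩ := (mem_classOf p).mp hp
    rw [hC] at h3; rw [hDe] at h4
    have e3 := fun x => Finset.ext_iff.mp h3 x
    have e4 := fun x => Finset.ext_iff.mp h4 x
    simp only [Finset.mem_inter, Finset.mem_symmDiff, hCx, hDx] at e3 e4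
    clear hp hCD hDeven h1 h2 hI hJ
    have e1 : C ∪ p.1 ∩ D = p.1 := by
      ext x
      simp only [Finset.mem_union, Finset.mem_inter, hCx, hDx]
      have := e3 x; have := e4 x
      tauto
    have e2 : C ∪ (D \ (p.1 ∩ D)) = p.2 := by
      ext x
      simp only [Finset.mem_union, Finset.mem_sdiff, Finset.mem_inter, hCx, hDx]
      have := e3 x; have := e4 x
      tauto
    show (C ∪ p.1 ∩ D, C ∪ (D \ (p.1 ∩ D))) = p
    rw [Prod.ext_iff]
    exact ⟨e1, e2⟩
  -- right_inv
  · intro S hS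
    rw [Finset.mem_coe, Finset.mem_filter, Finset.mem_powerset] at hS
    show (C ∪ S) ∩ D = S
    have h4 : ∀ x, x ∈ C → x ∉ D := fun x hx => Finset.disjoint_left.mp hCD hx
    clear hCD hDeven hI hJ
    ext x
    simp only [Finset.mem_inter, Finset.mem_union]
    have hSx : x ∈ S → x ∈ D := fun h => hS.1 h
    have hCx' := hCx x
    have hDx' := hDx x
    have h4' := h4 x
    tauto

/-- For even subsets `I, J` of `{1,...,5}`: `|I Δ J| = 4` iff the equivalence class of
`(I,J)` has exactly 8 elements; in that case, every pair `(K,L)` in the class satisfies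
`K ∩ L = I ∩ J`, `K ∪ L = I ∪ J`, `K Δ L = I Δ J`, and the class is closed under
swapping the two coordinates (so it consists of pairs `(aᵢ, Aᵢ)` and `(Aᵢ, aᵢ)`). -/
theorem stmt_6 (I J : Finset (Fin 5)) (hI : Even I.card) (hJ : Even J.card) :
    ((symmDiff I J).card = 4 ↔ (classOf (I, J)).card = 8) ∧
    ((symmDiff I J).card = 4 →
      (∀ p ∈ classOf (I, J),
        p.1 ∩ p.2 = I ∩ J ∧ p.1 ∪ p.2 = I ∪ J ∧ symmDiff p.1 p.2 = symmDiff I J) ∧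
      (∀ p ∈ classOf (I, J), (p.2, p.1) ∈ classOf (I, J))) := by
  have hcc := card_classOf I J hI hJ
  have heven := even_card_symmDiff hI hJ
  have hle : (symmDiff I J).card ≤ 5 := by
    have := Finset.card_le_univ (symmDiff I J)
    simpa using this
  constructor
  · constructor
    · intro h4
      rw [hcc, card_powerset_filter_parity _ _ (by rw [← Finset.card_pos, h4]; norm_num), h4]
      norm_num
    · intro h8
      by_contra hne
      have : (symmDiff I J).card = 0 ∨ (symmDiff I J).card = 2 := by
        rw [Nat.even_iff] at heven
        omega
      rcases this with h0 | h2
      · rw [Finset.card_eq_zero] at h0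
        rw [hcc, h0] at h8
        simp only [Finset.powerset_empty] at h8
        have : ({∅} : Finset (Finset (Fin 5))).filter (fun S => Even (S.card + (I ∩ J).card))
            ⊆ {∅} := Finset.filter_subset _ _
        have := Finset.card_le_card this
        simp at this
        omega
      · rw [hcc, card_powerset_filter_parity _ _ (by rw [← Finset.card_pos, h2]; norm_num),
          h2] at h8
        norm_num at h8
  · intro _
    constructor
    · intro p hp
      obtain ⟨_, _, h3, h4⟩ := (mem_classOf p).mp hp
      refine ⟨h3, ?_, h4⟩
      ext x
      have e3 := Finset.ext_iff.mp h3 x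
      have e4 := Finset.ext_iff.mp h4 x
      simp only [Finset.mem_inter, Finset.mem_symmDiff] at e3 e4
      simp only [Finset.mem_union]
      tauto
    · intro p hp
      obtain ⟨h1, h2, h3, h4⟩ := (mem_classOf p).mp hp
      rw [mem_classOf]
      refine ⟨h2, h1, by rw [Finset.inter_comm]; exact h3, by rw [symmDiff_comm]; exact h4⟩
end
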